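/- arXiv:2404.10719 — 8 statements merged into one kernel-verified Lean document; each statement's English description precedes it below -/
import Mathlib

section
/- With the setting of the previous statement, the infimum of L_DPO over fully supported policies equals the infimum of L_R over all reward functions r : Y → ℝ. -/
/-- The infimum of the DPO loss over fully supported policies equals the infimum of the
Bradley–Terry reward loss over all reward functions. -/
theorem stmt_4 {Y : Type*} [Fintype Y] [Nonempty Y]
    (πref : Y → ℝ) (href_pos : ∀ y, 0 < πref y) (href_sum : ∑ y, πref y = 1)
    (β : ℝ) (hβ : 0 < β)
    (D : Multiset (Y × Y))
    (σ : ℝ → ℝ) (hσ : ∀ x, σ x = 1 / (1 + Real.exp (-x)))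
    (LR : (Y → ℝ) → ℝ)
    (hLR : ∀ r : Y → ℝ, LR r = -(D.map (fun p => Real.log (σ (r p.1 - r p.2)))).sum)
    (LDPO : (Y → ℝ) → ℝ)
    (hLDPO : ∀ π : Y → ℝ, LDPO π = -(D.map (fun p => Real.log (σ
        (β * Real.log (π p.1 / πref p.1) - β * Real.log (π p.2 / πref p.2))))).sum) :
    sInf {v : ℝ | ∃ π : Y → ℝ, (∀ y, 0 < π y) ∧ (∑ y, π y = 1) ∧ LDPO π = v}
      = sInf {v : ℝ | ∃ r : Y → ℝ, LR r = v} := by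
  congr 1
  ext v
  simp only [Set.mem_setOf_eq]
  constructor
  · rintro ⟨π, hπ, hsum, hval⟩
    refine ⟨fun y => β * Real.log (π y / πref y), ?_⟩
    rw [hLR]; rw [hLDPO] at hval; exact hval
  · rintro ⟨r, hval⟩
    set Z := ∑ y, πref y * Real.exp (r y / β) with hZ
    have hZpos : 0 < Z := Finset.sum_pos (fun y _ => mul_pos (href_pos y) (Real.exp_pos _)) Finset.univ_nonempty
    refine ⟨fun y => πref y * Real.exp (r y / β) / Z,
      fun y => div_pos (mul_pos (href_pos y) (Real.exp_pos _)) hZpos,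
      by rw [← Finset.sum_div, ← hZ, div_self hZpos.ne'], ?_⟩
    rw [hLDPO, ← hval, hLR]
    have key : ∀ y, β * Real.log ((πref y * Real.exp (r y / β) / Z) / πref y)
        = r y - β * Real.log Z := by
      intro y
      have h1 : πref y * Real.exp (r y / β) / Z / πref y = Real.exp (r y / β) / Z := by
        field_simp [(href_pos y).ne']
      rw [h1, Real.log_div (Real.exp_pos _).ne' hZpos.ne',
        Real.log_exp, mul_sub, mul_div_cancel₀ _ hβ.ne']
    congr 1
    congr 1
    apply Multiset.map_congr rfl
    intro p _
    congr 2
    rw [key, key]; ring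
end

section
/- Let Y be a finite set, π_ref fully supported, β > 0, D a finite preference multiset. Suppose r* : Y → ℝ minimizes L_R over all reward functions, and define π_PPO(y) = π_ref(y)·exp(r*(y)/β)/Z. Then π_PPO minimizes L_DPO over all fully supported policies. -/
/-- Inclusion Π_PPO ⊆ Π_DPO: if `r*` minimizes the Bradley–Terry loss and
`π_PPO(y) = π_ref(y)·exp(r*(y)/β)/Z`, then `π_PPO` is a fully supported policy that
minimizes the DPO loss over all fully supported policies. -/
theorem stmt_5 {Y : Type*} [Fintype Y] [Nonempty Y]
    (πref : Y → ℝ) (href_pos : ∀ y, 0 < πref y) (href_sum : ∑ y, πref y = 1)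
    (β : ℝ) (hβ : 0 < β)
    (D : Multiset (Y × Y))
    (σ : ℝ → ℝ) (hσ : ∀ x, σ x = 1 / (1 + Real.exp (-x)))
    (LR : (Y → ℝ) → ℝ)
    (hLR : ∀ r : Y → ℝ, LR r = -(D.map (fun p => Real.log (σ (r p.1 - r p.2)))).sum)
    (LDPO : (Y → ℝ) → ℝ)
    (hLDPO : ∀ π : Y → ℝ, LDPO π = -(D.map (fun p => Real.log (σ
        (β * Real.log (π p.1 / πref p.1) - β * Real.log (π p.2 / πref p.2))))).sum)
    (rstar : Y → ℝ) (hrstar : ∀ r : Y → ℝ, LR rstar ≤ LR r)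
    (Z : ℝ) (hZ : Z = ∑ y, πref y * Real.exp (rstar y / β))
    (πPPO : Y → ℝ) (hπPPO : ∀ y, πPPO y = πref y * Real.exp (rstar y / β) / Z) :
    (∀ y, 0 < πPPO y) ∧ (∑ y, πPPO y = 1) ∧
    (∀ π : Y → ℝ, (∀ y, 0 < π y) → (∑ y, π y = 1) → LDPO πPPO ≤ LDPO π) := by
  have hZpos : 0 < Z := by
    rw [hZ]
    exact Finset.sum_pos (fun y _ => mul_pos (href_pos y) (Real.exp_pos _))
      Finset.univ_nonempty
  have hpos : ∀ y, 0 < πPPO y := fun y => by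
    rw [hπPPO]
    exact div_pos (mul_pos (href_pos y) (Real.exp_pos _)) hZpos
  refine ⟨hpos, ?_, ?_⟩
  · have : ∑ y, πPPO y = (∑ y, πref y * Real.exp (rstar y / β)) / Z := by
      rw [Finset.sum_div]; exact Finset.sum_congr rfl fun y _ => hπPPO y
    rw [this, ← hZ, div_self (ne_of_gt hZpos)]
  · -- key: β * log (πPPO y / πref y) = rstar y - β * log Z
    have key : ∀ y, β * Real.log (πPPO y / πref y) = rstar y - β * Real.log Z := by
      intro y
      rw [hπPPO]
      have h1 : πref y * Real.exp (rstar y / β) / Z / πref y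
          = Real.exp (rstar y / β) / Z := by
        rw [div_right_comm, mul_div_cancel_left₀ _ (ne_of_gt (href_pos y))]
      rw [h1, Real.log_div (Real.exp_ne_zero _) (ne_of_gt hZpos), Real.log_exp]
      field_simp
    have hDPO_eq : LDPO πPPO = LR rstar := by
      rw [hLDPO, hLR]
      congr 1
      congr 1
      apply Multiset.map_congr rfl
      intro p _
      rw [key p.1, key p.2]
      ring_nf
    intro π hπpos hπsum
    rw [hDPO_eq]
    set r : Y → ℝ := fun y => β * Real.log (π y / πref y) with hr
    have hLDPOr : LDPO π = LR r := by
      rw [hLDPO, hLR]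
    rw [hLDPOr]
    exact hrstar r
end

section
/- In the setting Y = {y₁, y₂, y₃}, π_ref = (1/2, 1/2, 0), β > 0, single preference pair (y₁ ≻ y₂): the policy π_DPO = (0.1, 0, 0.9) attains the infimum (value 0) of the DPO loss, yet π_DPO is not of the form π(y) ∝ π_ref(y)·exp(r(y)/β) for any reward r, because any such policy assigns probability 0 to y₃ while π_DPO(y₃) = 0.9 > 0. Hence there exists a minimizer of the DPO loss that is not a PPO solution. -/
/-- Counter-example: with `Y = {y₁,y₂,y₃}`, `π_ref = (1/2,1/2,0)`, single pair `y₁ ≻ y₂`,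
the policy `π_DPO = (0.1, 0, 0.9)` attains the infimum (value 0) of the DPO loss
`L(π) = log(1 + (π(y₂)/π(y₁))^β)`, yet it is not of the PPO form
`π(y) ∝ π_ref(y)·exp(r(y)/β)` for any reward `r` (any such policy assigns probability 0
to `y₃`, while `π_DPO(y₃) = 0.9 > 0`). Hence some DPO minimizer is not a PPO solution. -/
theorem stmt_7 (β : ℝ) (hβ : 0 < β)
    (πref : Fin 3 → ℝ) (hπref : πref = ![1/2, 1/2, 0])
    (L : (Fin 3 → ℝ) → ℝ)
    (hL : ∀ π : Fin 3 → ℝ, L π = Real.log (1 + (π 1 / π 0) ^ β))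
    (πDPO : Fin 3 → ℝ) (hπDPO : πDPO = ![0.1, 0, 0.9]) :
    L πDPO = 0 ∧
    (∀ π : Fin 3 → ℝ, (∀ y, 0 ≤ π y) → (∑ y, π y = 1) → 0 ≤ L π) ∧
    (∀ r : Fin 3 → ℝ, ∀ Z : ℝ, 0 < Z →
      ¬ (∀ y, πDPO y = πref y * Real.exp (r y / β) / Z)) := by
  refine ⟨?_, ?_, ?_⟩
  · rw [hL, hπDPO]
    norm_num
    rw [Real.zero_rpow (ne_of_gt hβ)]
    simp
  · intro π hpos _
    rw [hL]
    apply Real.log_nonneg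
    have : (0:ℝ) ≤ (π 1 / π 0) ^ β :=
      Real.rpow_nonneg (div_nonneg (hpos 1) (hpos 0)) β
    linarith
  · intro r Z hZ h
    have := h 2
    rw [hπDPO, hπref] at this
    norm_num [Matrix.cons_val_two, Matrix.tail_cons, Matrix.head_cons] at this
end

section
/- Let Y be finite, π_ref fully supported, β > 0, and D a finite preference multiset. The set Π_PPO of policies of the form π(y) ∝ π_ref(y)·exp(r(y)/β) for r minimizing L_R is contained in the set Π_DPO of minimizers of L_DPO over fully supported policies, and in general this containment can be strict (Π_PPO ⊊ Π_DPO when degenerate reference support is allowed, as in the three-action counter-example). -/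
/-- Theorem 4.1 (single-prompt finite setting): every PPO solution (KL-regularized optimum
of a Bradley–Terry-loss-minimizing reward) minimizes the DPO loss; and the containment can
be strict when degenerate reference support is allowed (three-action counter-example with
`π_ref = (1/2,1/2,0)` and the single pair `y₁ ≻ y₂`). -/
theorem stmt_8 {Y : Type*} [Fintype Y] [Nonempty Y]
    (πref : Y → ℝ) (href_pos : ∀ y, 0 < πref y) (href_sum : ∑ y, πref y = 1)
    (β : ℝ) (hβ : 0 < β)
    (D : Multiset (Y × Y))
    (σ : ℝ → ℝ) (hσ : ∀ x, σ x = 1 / (1 + Real.exp (-x)))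
    (LR : (Y → ℝ) → ℝ)
    (hLR : ∀ r : Y → ℝ, LR r = -(D.map (fun p => Real.log (σ (r p.1 - r p.2)))).sum)
    (LDPO : (Y → ℝ) → ℝ)
    (hLDPO : ∀ π : Y → ℝ, LDPO π = -(D.map (fun p => Real.log (σ
        (β * Real.log (π p.1 / πref p.1) - β * Real.log (π p.2 / πref p.2))))).sum)
    -- the three-action counter-example with degenerate reference support
    (πref₃ : Fin 3 → ℝ) (hπref₃ : πref₃ = ![1/2, 1/2, 0])
    (L₃ : (Fin 3 → ℝ) → ℝ)
    (hL₃ : ∀ π : Fin 3 → ℝ, L₃ π = Real.log (1 + (π 1 / π 0) ^ β)) :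
    -- Π_PPO ⊆ Π_DPO:
    (∀ rstar : Y → ℝ, (∀ r : Y → ℝ, LR rstar ≤ LR r) →
      ∀ πPPO : Y → ℝ,
        (∀ y, πPPO y = πref y * Real.exp (rstar y / β) /
            (∑ y', πref y' * Real.exp (rstar y' / β))) →
        ((∀ y, 0 < πPPO y) ∧ (∑ y, πPPO y = 1) ∧
          ∀ π : Y → ℝ, (∀ y, 0 < π y) → (∑ y, π y = 1) → LDPO πPPO ≤ LDPO π)) ∧
    -- strictness: a DPO-loss minimizer that is not of PPO form
    (∃ π : Fin 3 → ℝ, (∀ y, 0 ≤ π y) ∧ (∑ y, π y = 1) ∧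
      L₃ π = 0 ∧
      (∀ π' : Fin 3 → ℝ, (∀ y, 0 ≤ π' y) → (∑ y, π' y = 1) → 0 ≤ L₃ π') ∧
      (∀ r : Fin 3 → ℝ, ∀ Z : ℝ, 0 < Z →
        ¬ (∀ y, π y = πref₃ y * Real.exp (r y / β) / Z))) := by
  constructor
  · intro rstar hmin πPPO hπ
    set Z : ℝ := ∑ y', πref y' * Real.exp (rstar y' / β) with hZdef
    have hZ : 0 < Z :=
      Finset.sum_pos (fun y _ => mul_pos (href_pos y) (Real.exp_pos _))
        Finset.univ_nonempty
    have hpos : ∀ y, 0 < πPPO y := by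
      intro y; rw [hπ y]
      exact div_pos (mul_pos (href_pos y) (Real.exp_pos _)) hZ
    have hsum : ∑ y, πPPO y = 1 := by
      have : ∑ y, πPPO y = (∑ y, πref y * Real.exp (rstar y / β)) / Z := by
        rw [Finset.sum_div]; exact Finset.sum_congr rfl fun y _ => hπ y
      rw [this, ← hZdef, div_self hZ.ne']
    refine ⟨hpos, hsum, ?_⟩
    intro π hπpos hπsum
    -- LDPO of any positive policy equals LR of its implicit reward
    have hDPO_LR : ∀ q : Y → ℝ, LDPO q = LR (fun y => β * Real.log (q y / πref y)) := by
      intro q; rw [hLDPO, hLR]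
    -- implicit reward of πPPO is rstar shifted by a constant
    have key : ∀ y, β * Real.log (πPPO y / πref y) = rstar y - β * Real.log Z := by
      intro y
      have h1 : πPPO y / πref y = Real.exp (rstar y / β) / Z := by
        rw [hπ y]
        field_simp
        have he : πref y * Real.exp (rstar y / β) * Z
            = Real.exp (rstar y / β) * (Z * πref y) := by ring
        rw [div_self (href_pos y).ne']
      rw [h1, Real.log_div (Real.exp_ne_zero _) hZ.ne', Real.log_exp]
      field_simp
    have hshift : LR (fun y => β * Real.log (πPPO y / πref y)) = LR rstar := by
      rw [hLR, hLR]
      congr 1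
      congr 1
      apply Multiset.map_congr rfl
      intro p _
      congr 2
      rw [key p.1, key p.2]
      ring
    calc LDPO πPPO = LR rstar := by rw [hDPO_LR, hshift]
      _ ≤ LR (fun y => β * Real.log (π y / πref y)) := hmin _
      _ = LDPO π := (hDPO_LR π).symm
  · refine ⟨![1/2, 0, 1/2], ?_, ?_, ?_, ?_, ?_⟩
    · intro y; fin_cases y <;> norm_num
    · simp [Fin.sum_univ_three]; norm_num
    · rw [hL₃]
      norm_num [Real.zero_rpow hβ.ne']
    · intro π' hnn _
      rw [hL₃]
      apply Real.log_nonneg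
      have : (0:ℝ) ≤ (π' 1 / π' 0) ^ β :=
        Real.rpow_nonneg (div_nonneg (hnn 1) (hnn 0)) β
      linarith
    · intro r Z hZpos h
      have h2 := h 2
      rw [hπref₃] at h2
      change (1/2 : ℝ) = 0 * Real.exp (r 2 / β) / Z at h2
      norm_num at h2
end

section
/- Let Y be finite, let D be a finite preference multiset such that the comparison graph on Y (with an edge y_w → y_l for each pair in D) is acyclic and nonempty. Then inf_r L_R(r) over r : Y → ℝ equals 0, but the infimum is not attained (L_R(r) > 0 for every r). -/
private lemma msum_pos (s : Multiset ℝ) (h : ∀ x ∈ s, 0 < x) (h0 : s ≠ 0) : 0 < s.sum := by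
  obtain ⟨a, ha⟩ := Multiset.exists_mem_of_ne_zero h0
  obtain ⟨t, rfl⟩ := Multiset.exists_cons_of_mem ha
  rw [Multiset.sum_cons]
  have h1 : (0:ℝ) ≤ t.sum :=
    Multiset.sum_nonneg (fun x hx => (h x (Multiset.mem_cons_of_mem hx)).le)
  have h2 := h a (Multiset.mem_cons_self _ _)
  linarith

/-- If the comparison graph of a nonempty finite preference multiset is acyclic, then
the infimum of the Bradley–Terry loss over all rewards is `0`, but it is not attained:
`L_R(r) > 0` for every `r`. -/
theorem stmt_13 {Y : Type*} [Fintype Y]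
    (D : Multiset (Y × Y)) (hD_ne : D ≠ 0)
    (hacyclic : ∀ y : Y, ¬ Relation.TransGen (fun a b => (a, b) ∈ D) y y)
    (σ : ℝ → ℝ) (hσ : ∀ x, σ x = 1 / (1 + Real.exp (-x)))
    (LR : (Y → ℝ) → ℝ)
    (hLR : ∀ r : Y → ℝ, LR r = -(D.map (fun p => Real.log (σ (r p.1 - r p.2)))).sum) :
    IsGLB {v : ℝ | ∃ r : Y → ℝ, LR r = v} 0 ∧ (∀ r : Y → ℝ, 0 < LR r) := by
  classical
  have hlog : ∀ x : ℝ, Real.log (σ x) = -Real.log (1 + Real.exp (-x)) := by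
    intro x
    rw [hσ, one_div, Real.log_inv]
  have hLR' : ∀ r : Y → ℝ,
      LR r = (D.map (fun p => Real.log (1 + Real.exp (-(r p.1 - r p.2))))).sum := by
    intro r
    rw [hLR]
    have : (fun p : Y × Y => Real.log (σ (r p.1 - r p.2)))
        = (fun p : Y × Y => -Real.log (1 + Real.exp (-(r p.1 - r p.2)))) :=
      funext fun p => hlog _
    rw [this]
    rw [show (D.map (fun p : Y × Y => -Real.log (1 + Real.exp (-(r p.1 - r p.2)))))
        = (D.map (fun p : Y × Y => Real.log (1 + Real.exp (-(r p.1 - r p.2))))).map Neg.neg from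
      (Multiset.map_map _ _ _).symm]
    rw [Multiset.sum_map_neg', neg_neg]
  have hpos : ∀ r, 0 < LR r := by
    intro r
    rw [hLR' r]
    apply msum_pos
    · intro x hx
      obtain ⟨p, hp, rfl⟩ := Multiset.mem_map.mp hx
      have h1 : (0:ℝ) < Real.exp (-(r p.1 - r p.2)) := Real.exp_pos _
      exact Real.log_pos (by linarith)
    · simpa using hD_ne
  set rel : Y → Y → Prop := fun a b => (a, b) ∈ D with hrel
  set g : Y → ℕ :=
    fun y => (Finset.univ.filter (fun x => Relation.TransGen rel y x)).card with hgdef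
  have hg : ∀ p ∈ D, g p.2 + 1 ≤ g p.1 := by
    intro p hp
    have hsub : Finset.univ.filter (fun x => Relation.TransGen rel p.2 x)
        ⊆ Finset.univ.filter (fun x => Relation.TransGen rel p.1 x) := by
      intro x hx
      simp only [Finset.mem_filter, Finset.mem_univ, true_and] at hx ⊢
      exact Relation.TransGen.head hp hx
    have hss : Finset.univ.filter (fun x => Relation.TransGen rel p.2 x)
        ⊂ Finset.univ.filter (fun x => Relation.TransGen rel p.1 x) := by
      refine (Finset.ssubset_iff_of_subset hsub).mpr ⟨p.2, ?_, ?_⟩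
      · simp only [Finset.mem_filter, Finset.mem_univ, true_and]
        exact Relation.TransGen.single hp
      · simp only [Finset.mem_filter, Finset.mem_univ, true_and]
        exact hacyclic p.2
    exact Finset.card_lt_card hss
  have hsmall : ∀ ε : ℝ, 0 < ε → ∃ r : Y → ℝ, LR r < ε := by
    intro ε hε
    set N : ℝ := (Multiset.card D : ℝ) with hN
    have hN0 : 0 < N := by
      have h0 : 0 < Multiset.card D := Multiset.card_pos.mpr hD_ne
      rw [hN]
      exact_mod_cast h0
    set δ : ℝ := ε / N with hδdef
    have hδ : 0 < δ := div_pos hε hN0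
    set t : ℝ := max 1 (1 - Real.log δ) with ht
    have ht1 : 1 ≤ t := le_max_left _ _
    have ht0 : 0 < t := lt_of_lt_of_le one_pos ht1
    have hexp : Real.exp (-t) < δ := by
      have h2 : 1 - Real.log δ ≤ t := le_max_right _ _
      have h3 : -t < Real.log δ := by linarith
      calc Real.exp (-t) < Real.exp (Real.log δ) := Real.exp_lt_exp.mpr h3
        _ = δ := Real.exp_log hδ
    refine ⟨fun y => t * (g y : ℝ), ?_⟩
    rw [hLR']
    have hbound : ∀ x ∈ D.map (fun p => Real.log (1 +
        Real.exp (-((fun y => t * (g y : ℝ)) p.1 - (fun y => t * (g y : ℝ)) p.2)))),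
        x ≤ Real.exp (-t) := by
      intro x hx
      obtain ⟨p, hp, rfl⟩ := Multiset.mem_map.mp hx
      simp only
      have h1 : (g p.2 : ℝ) + 1 ≤ (g p.1 : ℝ) := by exact_mod_cast hg p hp
      have h2 : t ≤ t * (g p.1 : ℝ) - t * (g p.2 : ℝ) := by nlinarith
      have h3 : Real.exp (-(t * (g p.1 : ℝ) - t * (g p.2 : ℝ))) ≤ Real.exp (-t) :=
        Real.exp_le_exp.mpr (by linarith)
      have h4 : Real.log (1 + Real.exp (-(t * (g p.1 : ℝ) - t * (g p.2 : ℝ))))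
          ≤ (1 + Real.exp (-(t * (g p.1 : ℝ) - t * (g p.2 : ℝ)))) - 1 :=
        Real.log_le_sub_one_of_pos (by positivity)
      calc Real.log (1 + Real.exp (-(t * (g p.1 : ℝ) - t * (g p.2 : ℝ))))
          ≤ Real.exp (-(t * (g p.1 : ℝ) - t * (g p.2 : ℝ))) := by linarith
        _ ≤ Real.exp (-t) := h3
    have hsum := Multiset.sum_le_card_nsmul _ _ hbound
    rw [Multiset.card_map] at hsum
    have hcard : (Multiset.card D) • Real.exp (-t) = N * Real.exp (-t) := by
      rw [nsmul_eq_mul, hN]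
    have hlt : N * Real.exp (-t) < N * δ := by
      exact mul_lt_mul_of_pos_left hexp hN0
    have : N * δ = ε := by
      rw [hδdef, mul_div_assoc', mul_div_cancel_left₀ ε hN0.ne']
    calc (D.map (fun p => Real.log (1 +
          Real.exp (-((fun y => t * (g y : ℝ)) p.1 - (fun y => t * (g y : ℝ)) p.2))))).sum
        ≤ N * Real.exp (-t) := by rw [← hcard]; exact hsum
      _ < N * δ := hlt
      _ = ε := this
  refine ⟨⟨?_, ?_⟩, hpos⟩
  · rintro v ⟨r, rfl⟩
    exact (hpos r).le
  · intro b hb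
    by_contra h
    push_neg at h
    obtain ⟨r, hr⟩ := hsmall b h
    exact absurd (hb ⟨r, rfl⟩) (not_le.mpr hr)
end

section
/- In the three-action counter-example (Y = {y₁,y₂,y₃}, π_ref = (1/2,1/2,0), single pair y₁ ≻ y₂, β > 0), the set of policies attaining DPO loss 0 is exactly {π : π(y₁) > 0, π(y₂) = 0}, and the subset of these achievable as KL-regularized optima with respect to π_ref is exactly {π : π(y₁) = 1, π(y₂) = π(y₃) = 0} in the limit of reward gap → ∞; in particular for any policy π with π(y₃) > 0, π ∉ Π_PPO. -/
/-- In the three-action counter-example (`π_ref = (1/2,1/2,0)`, single pair `y₁ ≻ y₂`):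
the policies attaining DPO loss `0` are exactly `{π : π(y₁) > 0 ∧ π(y₂) = 0}`;
every PPO-form policy `π(y) ∝ π_ref(y)·exp(r(y)/β)` satisfies `π(y₃) = 0` (so any policy
with `π(y₃) > 0` is not a PPO solution); and any sequence of PPO-form policies whose DPO
loss tends to `0` converges (pointwise) to `(1,0,0)`. -/
theorem stmt_14 (β : ℝ) (hβ : 0 < β)
    (πref : Fin 3 → ℝ) (hπref : πref = ![1/2, 1/2, 0])
    (L : (Fin 3 → ℝ) → EReal)
    (hL : ∀ π : Fin 3 → ℝ,
      L π = if π 0 = 0 then ⊤ else ((Real.log (1 + (π 1 / π 0) ^ β) : ℝ) : EReal))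
    (PPOform : (Fin 3 → ℝ) → Prop)
    (hPPOform : ∀ π : Fin 3 → ℝ, PPOform π ↔ ∃ r : Fin 3 → ℝ,
      ∀ y, π y = πref y * Real.exp (r y / β) /
          (∑ y', πref y' * Real.exp (r y' / β))) :
    (∀ π : Fin 3 → ℝ, (∀ y, 0 ≤ π y) → (∑ y, π y = 1) →
      (L π = 0 ↔ (0 < π 0 ∧ π 1 = 0))) ∧
    (∀ π : Fin 3 → ℝ, PPOform π → π 2 = 0) ∧
    (∀ πs : ℕ → (Fin 3 → ℝ), (∀ n, PPOform (πs n)) →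
      Filter.Tendsto (fun n => L (πs n)) Filter.atTop (nhds (0 : EReal)) →
      ∀ y, Filter.Tendsto (fun n => πs n y) Filter.atTop (nhds ((![1, 0, 0] : Fin 3 → ℝ) y))) := by
  subst hπref
  -- basic facts about PPO-form policies
  have ppo_facts : ∀ π : Fin 3 → ℝ, PPOform π →
      0 < π 0 ∧ 0 ≤ π 1 ∧ π 0 + π 1 = 1 ∧ π 2 = 0 := by
    intro π hπ
    rw [hPPOform] at hπ
    obtain ⟨r, hr⟩ := hπ
    have hS : (∑ y', (![1/2, 1/2, 0] : Fin 3 → ℝ) y' * Real.exp (r y' / β))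
        = 1/2 * Real.exp (r 0 / β) + 1/2 * Real.exp (r 1 / β) := by
      simp [Fin.sum_univ_three]
    have hSpos : 0 < 1/2 * Real.exp (r 0 / β) + 1/2 * Real.exp (r 1 / β) := by
      positivity
    have h0 : π 0 = 1/2 * Real.exp (r 0 / β) /
        (1/2 * Real.exp (r 0 / β) + 1/2 * Real.exp (r 1 / β)) := by
      rw [hr 0, hS]; norm_num
    have h1 : π 1 = 1/2 * Real.exp (r 1 / β) /
        (1/2 * Real.exp (r 0 / β) + 1/2 * Real.exp (r 1 / β)) := by
      rw [hr 1, hS]; norm_num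
    have h2 : π 2 = 0 := by
      rw [hr 2, hS]; norm_num
      exact Or.inl rfl
    refine ⟨?_, ?_, ?_, h2⟩
    · rw [h0]; positivity
    · rw [h1]; positivity
    · rw [h0, h1, ← add_div, div_self hSpos.ne']
  refine ⟨?_, fun π hπ => (ppo_facts π hπ).2.2.2, ?_⟩
  · intro π hnn hsum
    rw [hL]
    by_cases h0 : π 0 = 0
    · simp [h0]
    · have hpos : 0 < π 0 := lt_of_le_of_ne (hnn 0) (Ne.symm h0)
      rw [if_neg h0]
      have hq : 0 ≤ π 1 / π 0 := div_nonneg (hnn 1) hpos.le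
      have hx : 0 ≤ (π 1 / π 0) ^ β := Real.rpow_nonneg hq β
      constructor
      · intro h
        have : Real.log (1 + (π 1 / π 0) ^ β) = 0 := by exact_mod_cast h
        have h1 : (1 : ℝ) + (π 1 / π 0) ^ β = 1 := by
          have := Real.exp_log (by linarith : (0:ℝ) < 1 + (π 1 / π 0) ^ β)
          rw [this] at *
          rw [← Real.exp_log (by linarith : (0:ℝ) < 1 + (π 1 / π 0) ^ β), ‹Real.log _ = 0›,
            Real.exp_zero]
        have hx0 : (π 1 / π 0) ^ β = 0 := by linarith
        have : π 1 / π 0 = 0 := (Real.rpow_eq_zero hq hβ.ne').mp hx0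
        exact ⟨hpos, by field_simp at this; simpa using this⟩
      · rintro ⟨-, h1⟩
        rw [h1]
        simp [Real.zero_rpow hβ.ne']
  · intro πs hPPO hlim
    have facts := fun n => ppo_facts (πs n) (hPPO n)
    set q : ℕ → ℝ := fun n => πs n 1 / πs n 0 with hqdef
    have hq0 : ∀ n, 0 ≤ q n := fun n =>
      div_nonneg (facts n).2.1 (facts n).1.le
    have hLn : ∀ n, L (πs n) = ((Real.log (1 + q n ^ β) : ℝ) : EReal) := by
      intro n
      rw [hL, if_neg (facts n).1.ne']
    have hlog : Filter.Tendsto (fun n => Real.log (1 + q n ^ β)) Filter.atTop (nhds 0) := by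
      rw [← EReal.tendsto_coe]
      simpa [hLn] using hlim
    have hxβ : Filter.Tendsto (fun n => q n ^ β) Filter.atTop (nhds 0) := by
      have h1 : ∀ n, q n ^ β = Real.exp (Real.log (1 + q n ^ β)) - 1 := by
        intro n
        rw [Real.exp_log (by have := Real.rpow_nonneg (hq0 n) β; linarith)]
        ring
      have : Filter.Tendsto (fun n => Real.exp (Real.log (1 + q n ^ β)) - 1)
          Filter.atTop (nhds 0) := by
        have := (Real.continuous_exp.tendsto 0).comp hlog
        simpa using this.sub_const 1
      simpa [← h1] using this
    have hqlim : Filter.Tendsto q Filter.atTop (nhds 0) := by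
      have hc : ContinuousAt (fun x : ℝ => x ^ (1/β)) 0 :=
        Real.continuousAt_rpow_const 0 (1/β) (Or.inr (by positivity))
      have := (hc.tendsto.comp hxβ)
      have heq : ∀ n, (q n ^ β) ^ (1/β) = q n := by
        intro n
        rw [← Real.rpow_mul (hq0 n), mul_one_div, div_self hβ.ne', Real.rpow_one]
      have hz : (0:ℝ) ^ (1/β) = 0 := Real.zero_rpow (by positivity)
      rw [hz] at this
      exact this.congr heq
    have hπ1 : Filter.Tendsto (fun n => πs n 1) Filter.atTop (nhds 0) := by
      apply squeeze_zero (fun n => (facts n).2.1) (fun n => ?_) hqlim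
      have h01 : πs n 0 ≤ 1 := by have := (facts n).2.2.1; have := (facts n).2.1; linarith
      calc πs n 1 = q n * πs n 0 := by
              exact (div_mul_cancel₀ _ (facts n).1.ne').symm
        _ ≤ q n * 1 := by
              exact mul_le_mul_of_nonneg_left h01 (hq0 n)
        _ = q n := by ring
    intro y
    fin_cases y
    · have : ∀ n, πs n 0 = 1 - πs n 1 := fun n => by have := (facts n).2.2.1; linarith
      have h := (tendsto_const_nhds (α := ℕ) (f := Filter.atTop) (x := (1:ℝ))).sub hπ1
      rw [sub_zero] at h
      simpa using h.congr fun n => (this n).symm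
    · simpa using hπ1
    · have h := tendsto_const_nhds (α := ℕ) (f := Filter.atTop) (x := (0:ℝ))
      simpa using h.congr fun n => ((facts n).2.2.2).symm
end

section
/- Let Y be finite, π_ref fully supported, β > 0, and suppose π minimizes the DPO loss L_DPO over fully supported policies with the minimum attained. Then the reward r = f(π), where f(π)(y) = β·log(π(y)/π_ref(y)), minimizes the Bradley-Terry loss L_R over all reward functions, and π equals the KL-regularized optimal policy π_r for this reward; hence π ∈ Π_PPO. -/
/-- Converse inclusion: if a fully supported policy `π` attains the minimum of the DPO
loss over fully supported policies, then `r = f(π)` (with `f(π)(y) = β·log(π(y)/π_ref(y))`)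
minimizes the Bradley–Terry loss over all rewards, and `π` is the KL-regularized optimal
policy `π_r` for this reward; hence `π ∈ Π_PPO`. -/
theorem stmt_18 {Y : Type*} [Fintype Y] [Nonempty Y]
    (πref : Y → ℝ) (href_pos : ∀ y, 0 < πref y) (href_sum : ∑ y, πref y = 1)
    (β : ℝ) (hβ : 0 < β)
    (D : Multiset (Y × Y))
    (σ : ℝ → ℝ) (hσ : ∀ x, σ x = 1 / (1 + Real.exp (-x)))
    (LR : (Y → ℝ) → ℝ)
    (hLR : ∀ r : Y → ℝ, LR r = -(D.map (fun p => Real.log (σ (r p.1 - r p.2)))).sum)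
    (LDPO : (Y → ℝ) → ℝ)
    (hLDPO : ∀ π : Y → ℝ, LDPO π = -(D.map (fun p => Real.log (σ
        (β * Real.log (π p.1 / πref p.1) - β * Real.log (π p.2 / πref p.2))))).sum)
    (π : Y → ℝ) (hπ_pos : ∀ y, 0 < π y) (hπ_sum : ∑ y, π y = 1)
    (hmin : ∀ π' : Y → ℝ, (∀ y, 0 < π' y) → (∑ y, π' y = 1) → LDPO π ≤ LDPO π')
    (f : Y → ℝ) (hf : ∀ y, f y = β * Real.log (π y / πref y)) :
    (∀ r : Y → ℝ, LR f ≤ LR r) ∧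
    (∀ y, π y = πref y * Real.exp (f y / β) /
        (∑ y', πref y' * Real.exp (f y' / β))) := by
  have hexp : ∀ y, πref y * Real.exp (f y / β) = π y := by
    intro y
    have h1 : f y / β = Real.log (π y / πref y) := by
      rw [hf]; field_simp
    rw [h1, Real.exp_log (div_pos (hπ_pos y) (href_pos y)),
      mul_div_cancel₀ _ (ne_of_gt (href_pos y))]
  constructor
  · intro r
    set Z : ℝ := ∑ y', πref y' * Real.exp (r y' / β) with hZ
    have hZpos : 0 < Z := Finset.sum_pos (fun y _ =>
      mul_pos (href_pos y) (Real.exp_pos _)) Finset.univ_nonempty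
    set π' : Y → ℝ := fun y => πref y * Real.exp (r y / β) / Z with hπ'
    have hπ'pos : ∀ y, 0 < π' y := fun y =>
      div_pos (mul_pos (href_pos y) (Real.exp_pos _)) hZpos
    have hπ'sum : ∑ y, π' y = 1 := by
      simp only [hπ', ← Finset.sum_div]
      exact div_self (ne_of_gt hZpos)
    have key : ∀ y, β * Real.log (π' y / πref y) = r y - β * Real.log Z := by
      intro y
      have : π' y / πref y = Real.exp (r y / β) / Z := by
        simp only [hπ']
        field_simp [ne_of_gt (href_pos y), ne_of_gt hZpos]
      rw [this, Real.log_div (Real.exp_ne_zero _) (ne_of_gt hZpos), Real.log_exp,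
        mul_sub, mul_div_cancel₀ _ (ne_of_gt hβ)]
    have hLDPO' : LDPO π' = LR r := by
      rw [hLDPO, hLR]
      congr 1
      congr 1
      apply Multiset.map_congr rfl
      intro p _
      rw [key, key]
      ring_nf
    have hLDPOπ : LDPO π = LR f := by
      rw [hLDPO, hLR]
      congr 1
      congr 1
      apply Multiset.map_congr rfl
      intro p _
      rw [hf, hf]
    calc LR f = LDPO π := hLDPOπ.symm
      _ ≤ LDPO π' := hmin π' hπ'pos hπ'sum
      _ = LR r := hLDPO'
  · intro y
    have hZ : ∑ y', πref y' * Real.exp (f y' / β) = 1 := by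
      simp only [hexp]; exact hπ_sum
    rw [hexp, hZ, div_one]
end

section
/- Let Y be finite, π_ref fully supported, β > 0, fixed dataset D. Define g : (fully supported policies) → (rewards modulo additive constants) by g(π) = [f(π)] where f(π)(y) = β·log(π(y)/π_ref(y)). Then g is a bijection, with inverse [r] ↦ π_r where π_r(y) ∝ π_ref(y)·exp(r(y)/β). -/
lemma stmt_19_inv {Y : Type*} [Fintype Y] [Nonempty Y]
    (πref : Y → ℝ) (href_pos : ∀ y, 0 < πref y)
    (β : ℝ) (hβ : 0 < β)
    (f : (Y → ℝ) → (Y → ℝ))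
    (hf : ∀ π : Y → ℝ, ∀ y, f π y = β * Real.log (π y / πref y))
    (r : Y → ℝ) (πr : Y → ℝ)
    (hπr : ∀ y, πr y = πref y * Real.exp (r y / β) /
        (∑ y', πref y' * Real.exp (r y' / β))) :
    ∃ c : ℝ, ∀ y, f πr y = r y + c := by
  set Z := ∑ y', πref y' * Real.exp (r y' / β) with hZ
  have hZpos : 0 < Z :=
    Finset.sum_pos (fun y _ => mul_pos (href_pos y) (Real.exp_pos _)) Finset.univ_nonempty
  refine ⟨-β * Real.log Z, fun y => ?_⟩
  rw [hf, hπr y]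
  have hpy := (href_pos y).ne'
  have : πref y * Real.exp (r y / β) / Z / πref y = Real.exp (r y / β) / Z := by
    field_simp
  rw [this, Real.log_div (Real.exp_pos _).ne' hZpos.ne', Real.log_exp]
  field_simp
  ring

/-- The map `π ↦ [f(π)]`, `f(π)(y) = β·log(π(y)/π_ref(y))`, is a bijection from fully
supported policies to rewards modulo additive constants, with inverse
`[r] ↦ π_r`, `π_r(y) ∝ π_ref(y)·exp(r(y)/β)`: it is injective modulo constants,
surjective onto every class `[r]`, and `f(π_r)` differs from `r` by a constant. -/
theorem stmt_19 {Y : Type*} [Fintype Y] [Nonempty Y]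
    (πref : Y → ℝ) (href_pos : ∀ y, 0 < πref y) (href_sum : ∑ y, πref y = 1)
    (β : ℝ) (hβ : 0 < β)
    (f : (Y → ℝ) → (Y → ℝ))
    (hf : ∀ π : Y → ℝ, ∀ y, f π y = β * Real.log (π y / πref y)) :
    -- injectivity modulo additive constants
    (∀ π₁ π₂ : Y → ℝ,
      (∀ y, 0 < π₁ y) → (∑ y, π₁ y = 1) →
      (∀ y, 0 < π₂ y) → (∑ y, π₂ y = 1) →
      (∃ c : ℝ, ∀ y, f π₁ y = f π₂ y + c) → π₁ = π₂) ∧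
    -- surjectivity onto every class of rewards modulo constants
    (∀ r : Y → ℝ, ∃ π : Y → ℝ, (∀ y, 0 < π y) ∧ (∑ y, π y = 1) ∧
      ∃ c : ℝ, ∀ y, f π y = r y + c) ∧
    -- the inverse is r ↦ π_r
    (∀ r : Y → ℝ, ∀ πr : Y → ℝ,
      (∀ y, πr y = πref y * Real.exp (r y / β) /
          (∑ y', πref y' * Real.exp (r y' / β))) →
      ∃ c : ℝ, ∀ y, f πr y = r y + c) := by
  refine ⟨?_, ?_, fun r πr hπr => stmt_19_inv πref href_pos β hβ f hf r πr hπr⟩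
  · rintro π₁ π₂ h1 hs1 h2 hs2 ⟨c, hc⟩
    have key : ∀ y, π₁ y = π₂ y * Real.exp (c / β) := by
      intro y
      have := hc y
      rw [hf, hf] at this
      have hlog : Real.log (π₁ y / πref y) = Real.log (π₂ y / πref y) + c / β := by
        field_simp at this ⊢
        linarith
      have e1 : π₁ y / πref y = π₂ y / πref y * Real.exp (c / β) := by
        have := congrArg Real.exp hlog
        rwa [Real.exp_log (div_pos (h1 y) (href_pos y)),
          Real.exp_add, Real.exp_log (div_pos (h2 y) (href_pos y))] at this
      have hpy := (href_pos y).ne'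
      field_simp at e1
      linarith
    have hsum : (1 : ℝ) = 1 * Real.exp (c / β) := by
      calc (1 : ℝ) = ∑ y, π₁ y := hs1.symm
        _ = ∑ y, π₂ y * Real.exp (c / β) := Finset.sum_congr rfl (fun y _ => key y)
        _ = (∑ y, π₂ y) * Real.exp (c / β) := by rw [Finset.sum_mul]
        _ = 1 * Real.exp (c / β) := by rw [hs2]
      
    have hexp : Real.exp (c / β) = 1 := by linarith
    funext y
    rw [key y, hexp, mul_one]
  · intro r
    set Z := ∑ y', πref y' * Real.exp (r y' / β) with hZ
    have hZpos : 0 < Z :=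
      Finset.sum_pos (fun y _ => mul_pos (href_pos y) (Real.exp_pos _)) Finset.univ_nonempty
    refine ⟨fun y => πref y * Real.exp (r y / β) / Z, fun y =>
      div_pos (mul_pos (href_pos y) (Real.exp_pos _)) hZpos, ?_, ?_⟩
    · rw [← Finset.sum_div, ← hZ, div_self hZpos.ne']
    · exact stmt_19_inv πref href_pos β hβ f hf r _ (fun y => rfl)
end
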